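/- The q-multinomial identity qbinom3(l; l-n, l-n, 2n-l) − qbinom3(l; l-n-1, l-n+1, 2n-l) = (q^{l-n}/[l-n+1]_q) · qbinom(2(l-n), l-n) · qbinom(l, 2n-l) holds for n ≤ l ≤ 2n. -/

import Mathlib

inductive Step : Type
  | E | D | N
deriving DecidableEq

instance : Fintype Step :=
  ⟨{Step.E, Step.D, Step.N}, fun x => by cases x <;> simp⟩

open Step Polynomial

/-- All words of length `l` over the step alphabet. -/
def Words (l : ℕ) : Finset (List Step) :=
  (Finset.univ : Finset (Fin l → Step)).image List.ofFn

/-- Delannoy paths from (0,0) to (m,n) with `l` steps, encoded as words: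
`#E + #D = m`, `#N + #D = n`, length `l`. -/
def DelSet (m n l : ℕ) : Finset (List Step) :=
  (Words l).filter fun w => w.count E + w.count D = m ∧ w.count N + w.count D = n

/-- A word is bad if some prefix contains more N's than E's. -/
def bad (w : List Step) : Bool :=
  (List.range (w.length + 1)).any fun k => (w.take k).count E < (w.take k).count N

/-- Bad Delannoy paths from (0,0) to (n,n) with `l` steps. -/
def BDelSet (n l : ℕ) : Finset (List Step) :=
  (DelSet n n l).filter fun w => bad w

/-- Schröder paths: Delannoy paths to (n,n) never going above the diagonal. -/
def SchSet (n l : ℕ) : Finset (List Step) :=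
  (DelSet n n l).filter fun w => ¬ bad w

/-- Major index of a word w_1 ⋯ w_l with respect to a ranking of the letters:
the sum of all positions i (1 ≤ i ≤ l-1) with w_i > w_{i+1}. -/
def maj (rank : Step → ℕ) (w : List Step) : ℕ :=
  ∑ i ∈ Finset.range (w.length - 1),
    if rank (w.getD (i + 1) E) < rank (w.getD i E) then i + 1 else 0

/-- q-integer [m] = 1 + q + ⋯ + q^{m-1}. -/
noncomputable def qint (m : ℕ) : Polynomial ℚ :=
  ∑ i ∈ Finset.range m, X ^ i

/-- q-factorial. -/
noncomputable def qfact : ℕ → Polynomial ℚ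
  | 0 => 1
  | m + 1 => qfact m * qint (m + 1)

/-- Gaussian binomial coefficient, via the q-Pascal recurrence. -/
noncomputable def qbinom : ℕ → ℕ → Polynomial ℚ
  | _, 0 => 1
  | 0, _ + 1 => 0
  | m + 1, k + 1 => qbinom m k + X ^ (k + 1) * qbinom m (k + 1)

/-- q-trinomial coefficient [l]!/([a]![b]![c]!), defined when a+b+c = l. -/
noncomputable def qbinom3 (l a b c : ℕ) : Polynomial ℚ :=
  if a + b + c = l then qbinom l a * qbinom (l - a) b else 0

/-- Depth after the first `i` steps: #N − #E. -/
def depth (w : List Step) (i : ℕ) : ℤ :=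
  ((w.take i).count N : ℤ) - (w.take i).count E

/-- `k` (0 ≤ k ≤ l) achieves the maximal running depth. -/
def isMaxDepth (w : List Step) (k : ℕ) : Bool :=
  (List.range (w.length + 1)).all fun i => decide (depth w i ≤ depth w k)

/-- The first index (number of steps) at which the running depth is maximal. -/
def firstDeep (w : List Step) : ℕ :=
  (List.range (w.length + 1)).findIdx (isMaxDepth w)

/-- The last index at which the running depth is maximal. -/
def lastDeep (w : List Step) : ℕ :=
  w.length - (List.range (w.length + 1)).reverse.findIdx (isMaxDepth w)

/-- Replace the first deepest step (the step w_k, k = firstDeep) with E. -/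
def phi (w : List Step) : List Step := w.set (firstDeep w - 1) E

/-- Replace the step following the last deepest point with N. -/
def phiInv (w : List Step) : List Step := w.set (lastDeep w) N

/-- Number of consecutive D's immediately after the first deepest step. -/
def runS (w : List Step) : ℕ := ((w.drop (firstDeep w)).takeWhile (· == D)).length

/-- Number of consecutive D's immediately before the first deepest step. -/
def runR (w : List Step) : ℕ :=
  ((w.take (firstDeep w - 1)).reverse.takeWhile (· == D)).length

/-- The window map: replace W₁ = D^r w_k D^s by D^{r-1} E D^{s+1} if r ≥ 1,
and by D^s E if r = 0. -/
def phiWin (w : List Step) : List Step :=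
  let k := firstDeep w - 1
  let r := runR w
  let s := runS w
  let seg : List Step :=
    if 1 ≤ r then List.replicate (r - 1) D ++ [E] ++ List.replicate (s + 1) D
    else List.replicate s D ++ [E]
  w.take (k - r) ++ seg ++ w.drop (k + s + 1)

/-- 0-based index of the first step after which the path is above the diagonal. -/
def firstAbove (w : List Step) : ℕ :=
  (List.range w.length).findIdx fun i =>
    decide ((w.take (i + 1)).count E < (w.take (i + 1)).count N)

/-- The map ψ of Bonin–Shapiro–Simion: replace with E the last N of the maximal
run of consecutive N's beginning at the first step going above the diagonal. -/
def psi (w : List Step) : List Step :=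
  let i := firstAbove w
  let j := i + ((w.drop i).takeWhile (· == N)).length - 1
  w.set j E

lemma qbinom_zero (l : ℕ) : qbinom l 0 = 1 := by cases l <;> simp [qbinom]

lemma qbinom_eq_zero : ∀ l k : ℕ, l < k → qbinom l k = 0
  | 0, _ + 1, _ => by simp [qbinom]
  | l + 1, k + 1, h => by
    rw [qbinom, qbinom_eq_zero l k (by omega), qbinom_eq_zero l (k+1) (by omega)]
    ring

lemma qbinom_self : ∀ l : ℕ, qbinom l l = 1
  | 0 => by simp [qbinom]
  | l + 1 => by
    rw [qbinom, qbinom_self l, qbinom_eq_zero l (l+1) (by omega)]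
    ring

lemma qint_add (a b : ℕ) : qint (a + b) = qint a + X ^ a * qint b := by
  rw [qint, qint, qint, Finset.sum_range_add, Finset.mul_sum]
  simp [pow_add]

lemma qint_succ (m : ℕ) : qint (m + 1) = qint m + X ^ m := by
  simpa [qint] using qint_add m 1

lemma qfact_ne_zero (n : ℕ) : qfact n ≠ 0 := by
  have h : ∀ n : ℕ, (qfact n).eval 1 = (n.factorial : ℚ) := by
    intro n
    induction n with
    | zero => simp [qfact]
    | succ n ih => simp [qfact, qint, ih, Nat.factorial_succ, mul_comm]
  intro hz
  have := h n
  rw [hz] at this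
  simp at this
  exact Nat.factorial_ne_zero n (by exact_mod_cast this.symm)

lemma qbinom_mul_qfact : ∀ l k : ℕ, k ≤ l →
    qbinom l k * (qfact k * qfact (l - k)) = qfact l
  | l, 0, _ => by simp [qbinom_zero, qfact]
  | 0, k + 1, h => by omega
  | l + 1, k + 1, h => by
    rcases Nat.lt_or_ge k l with hk | hk
    · have h1 := qbinom_mul_qfact l k (by omega)
      have h2 := qbinom_mul_qfact l (k + 1) (by omega)
      have e1 : qfact (k + 1) = qfact k * qint (k + 1) := rfl
      have e2 : l - k = (l - (k + 1)) + 1 := by omega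
      have e3 : qfact (l - k) = qfact (l - (k+1)) * qint (l - k) := by
        rw [e2, qfact]
      have e4 : qint (l + 1) = qint (k + 1) + X ^ (k + 1) * qint (l - k) := by
        have : (k + 1) + (l - k) = l + 1 := by omega
        rw [← this, qint_add]
      have e5 : l + 1 - (k + 1) = l - k := by omega
      have e6 : qfact (l + 1) = qfact l * qint (l + 1) := rfl
      rw [qbinom, e5, e6, e4]
      rw [e1] at h2 ⊢
      rw [e3] at h1 ⊢
      linear_combination qint (k+1) * h1 + X ^ (k+1) * qint (l - k) * h2
    · have hkl : k = l := by omega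
      subst hkl
      have h1 := qbinom_mul_qfact k k le_rfl
      rw [qbinom, qbinom_eq_zero k (k + 1) (by omega)]
      simp only [Nat.sub_self, Nat.add_sub_cancel] at *
      have e1 : qfact (k + 1) = qfact k * qint (k + 1) := rfl
      rw [e1, qfact]
      simp only [qfact] at h1 ⊢
      linear_combination qint (k + 1) * h1

theorem main_aux (m c : ℕ) :
    qint (m + 1) * (qbinom3 (m + m + c) m m c - qbinom3 (m + m + c) (m - 1) (m + 1) c) =
      X ^ m * (qbinom (2 * m) m * qbinom (m + m + c) c) := by
  rcases Nat.eq_zero_or_pos m with rfl | hm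
  · simp [qbinom3, qbinom_zero, qbinom_self, qint]
  · obtain ⟨m, rfl⟩ : ∃ m', m = m' + 1 := ⟨m - 1, by omega⟩
    simp only [qbinom3]
    rw [if_pos trivial, if_pos (by omega : m + 1 - 1 + (m + 1 + 1) + c = m + 1 + (m + 1) + c)]
    rw [show m + 1 + (m + 1) + c - (m + 1) = m + 1 + c from by omega,
        show m + 1 - 1 = m from rfl,
        show m + 1 + (m + 1) + c - m = m + 2 + c from by omega,
        show 2 * (m + 1) = 2 * m + 2 from by ring]
    have hF : qfact (m + 2) * (qfact (m + 1) * qfact c) ≠ 0 :=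
      mul_ne_zero (qfact_ne_zero _) (mul_ne_zero (qfact_ne_zero _) (qfact_ne_zero _))
    apply mul_right_cancel₀ hF
    have E1 := qbinom_mul_qfact (m + 1 + c) (m + 1) (by omega)
    rw [show m + 1 + c - (m + 1) = c from by omega] at E1
    have E2 := qbinom_mul_qfact (m + 1 + (m + 1) + c) (m + 1) (by omega)
    rw [show m + 1 + (m + 1) + c - (m + 1) = m + 1 + c from by omega] at E2
    have E3 := qbinom_mul_qfact (m + 2 + c) (m + 2) (by omega)
    rw [show m + 2 + c - (m + 2) = c from by omega] at E3
    have E4 := qbinom_mul_qfact (m + 1 + (m + 1) + c) m (by omega)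
    rw [show m + 1 + (m + 1) + c - m = m + 2 + c from by omega] at E4
    have E5 := qbinom_mul_qfact (2 * m + 2) (m + 1) (by omega)
    rw [show 2 * m + 2 - (m + 1) = m + 1 from by omega] at E5
    have E6 := qbinom_mul_qfact (m + 1 + (m + 1) + c) c (by omega)
    rw [show m + 1 + (m + 1) + c - c = 2 * m + 2 from by omega] at E6
    have f1 : qfact (m + 2) = qfact (m + 1) * qint (m + 2) := rfl
    have f2 : qfact (m + 1) = qfact m * qint (m + 1) := rfl
    have f4 : qint (m + 2) = qint (m + 1) + X ^ (m + 1) := qint_succ (m + 1)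
    linear_combination
      (qint (m + 2) * qbinom (m + 1 + (m + 1) + c) (m + 1) * qbinom (m + 1 + c) (m + 1) *
          qfact (m + 1) * qfact c -
        X ^ (m + 1) * qbinom (2 * m + 2) (m + 1) * qbinom (m + 1 + (m + 1) + c) c *
          qfact (m + 1) * qfact c) * f1
      - (qint (m + 2) * qbinom (m + 1 + (m + 1) + c) m * qbinom (m + 2 + c) (m + 2) *
          qfact (m + 2) * qfact c) * f2
      + (qint (m + 2) ^ 2 * qbinom (m + 1 + (m + 1) + c) (m + 1) * qfact (m + 1)) * E1
      + qint (m + 2) ^ 2 * E2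
      - (qint (m + 2) * qint (m + 1) * qbinom (m + 1 + (m + 1) + c) m * qfact m) * E3
      - (qint (m + 2) * qint (m + 1)) * E4
      - (X ^ (m + 1) * qint (m + 2) * qbinom (m + 1 + (m + 1) + c) c * qfact c) * E5
      - (X ^ (m + 1) * qint (m + 2)) * E6
      + (qint (m + 2) * qfact (m + 1 + (m + 1) + c)) * f4

/-- the q-multinomial identity
qbinom3(l; l-n, l-n, 2n-l) − qbinom3(l; l-n-1, l-n+1, 2n-l)
  = (q^{l-n}/[l-n+1]) · qbinom(2(l-n), l-n) · qbinom(l, 2n-l)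
for n ≤ l ≤ 2n (stated with the denominator [l-n+1] cleared). -/
theorem q_multinomial_identity_NltE (n l : ℕ) (hnl : n ≤ l) (hl : l ≤ 2 * n) :
    qint (l - n + 1) *
        (qbinom3 l (l - n) (l - n) (2 * n - l) -
          qbinom3 l (l - n - 1) (l - n + 1) (2 * n - l)) =
      X ^ (l - n) * (qbinom (2 * (l - n)) (l - n) * qbinom l (2 * n - l)) := by
  obtain ⟨m, rfl⟩ : ∃ m, l = n + m := ⟨l - n, by omega⟩
  obtain ⟨c, rfl⟩ : ∃ c, n = m + c := ⟨n - m, by omega⟩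
  rw [show m + c + m - (m + c) = m from by omega,
      show 2 * (m + c) - (m + c + m) = c from by omega,
      show m + c + m = m + m + c from by ring]
  exact main_aux m c
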